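/- Let m, d, ħ > 0, v ∈ ℝ and t ∈ ℝ. The free Gaussian wave packet Ψ(r,t; m,v,d) = (2/π)^{1/4} · √(dm/(2d²m + itħ)) · exp(−d²m²(r−tv)²/(4d⁴m² + t²ħ²)) · exp(i(m t r² ħ² − 4d⁴m³ v(tv − 2r))/(8d⁴m²ħ + 2t²ħ³)) remains normalized for all times: ∫_ℝ |Ψ(r,t; m,v,d)|² dr = 1. -/

import Mathlib

open MeasureTheory

noncomputable section

/-- The free Gaussian wave packet `Ψ(r,t; m,v,d)` with reduced Planck constant `hbar`;
the square root is the principal branch. -/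
noncomputable def gaussPacket (hbar m v d : ℝ) (r t : ℝ) : ℂ :=
  (((2 / Real.pi) ^ ((1 : ℝ) / 4) : ℝ) : ℂ) *
    (((d * m : ℝ) : ℂ) / ((2 * d ^ 2 * m : ℝ) + Complex.I * t * hbar)) ^ ((1 : ℂ) / 2) *
    Complex.exp ((-(d ^ 2 * m ^ 2 * (r - t * v) ^ 2) /
      (4 * d ^ 4 * m ^ 2 + t ^ 2 * hbar ^ 2) : ℝ) : ℂ) *
    Complex.exp (Complex.I *
      (((m * t * r ^ 2 * hbar ^ 2 - 4 * d ^ 4 * m ^ 3 * v * (t * v - 2 * r)) /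
        (8 * d ^ 4 * m ^ 2 * hbar + 2 * t ^ 2 * hbar ^ 3) : ℝ) : ℂ))

/-- The free Gaussian wave packet remains normalized for all times. -/
theorem gaussPacket_normalized
    {hbar m d : ℝ} (hhbar : 0 < hbar) (hm : 0 < m) (hd : 0 < d) (v t : ℝ) :
    ∫ r : ℝ, ‖gaussPacket hbar m v d r t‖ ^ 2 = 1 := by
  set D : ℝ := 4 * d ^ 4 * m ^ 2 + t ^ 2 * hbar ^ 2 with hD
  have hDpos : 0 < D := by positivity
  have habs_z : ‖((d * m : ℝ) : ℂ) /
      ((2 * d ^ 2 * m : ℝ) + Complex.I * t * hbar)‖ = d * m / Real.sqrt D := by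
    have hden : ((2 * d ^ 2 * m : ℝ) : ℂ) + Complex.I * t * hbar
        = ((2 * d ^ 2 * m : ℝ) : ℂ) + ((t * hbar : ℝ) : ℂ) * Complex.I := by
      push_cast; ring
    rw [norm_div, Complex.norm_real, Real.norm_eq_abs, abs_of_pos (by positivity), hden,
      Complex.norm_add_mul_I]
    congr 2
    rw [hD]; ring
  have key : ∀ r : ℝ, ‖gaussPacket hbar m v d r t‖ ^ 2 =
      (Real.sqrt (2 / Real.pi) * (d * m / Real.sqrt D)) *
        Real.exp (-(2 * d ^ 2 * m ^ 2 / D) * (r - t * v) ^ 2) := by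
    intro r
    have h12 : ((1 : ℂ) / 2) = (((1 : ℝ) / 2 : ℝ) : ℂ) := by norm_num
    rw [gaussPacket, norm_mul, norm_mul, norm_mul, h12, Complex.norm_cpow_real, habs_z,
      Complex.norm_real, Real.norm_eq_abs, Complex.norm_exp, Complex.norm_exp]
    have h1 : |(2 / Real.pi) ^ ((1 : ℝ) / 4)| = (2 / Real.pi) ^ ((1 : ℝ) / 4) :=
      abs_of_nonneg (Real.rpow_nonneg (by positivity) _)
    have h2 : (Complex.I * (((m * t * r ^ 2 * hbar ^ 2 -
        4 * d ^ 4 * m ^ 3 * v * (t * v - 2 * r)) /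
        (8 * d ^ 4 * m ^ 2 * hbar + 2 * t ^ 2 * hbar ^ 3) : ℝ) : ℂ)).re = 0 := by
      simp only [Complex.mul_re, Complex.I_re, Complex.I_im, Complex.ofReal_re,
        Complex.ofReal_im]
      ring
    have h3 : ((((-(d ^ 2 * m ^ 2 * (r - t * v) ^ 2) /
        (4 * d ^ 4 * m ^ 2 + t ^ 2 * hbar ^ 2) : ℝ)) : ℂ)).re
        = -(d ^ 2 * m ^ 2 * (r - t * v) ^ 2) / D := by
      rw [Complex.ofReal_re, hD]
    rw [h1, h2, h3, Real.exp_zero, mul_one]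
    have h4 : ((d * m / Real.sqrt D) ^ ((1 : ℝ) / 2)) ^ 2 = d * m / Real.sqrt D := by
      rw [← Real.rpow_natCast (_ ^ ((1:ℝ)/2)) 2, ← Real.rpow_mul (by positivity)]
      norm_num
    have h5 : ((2 / Real.pi) ^ ((1 : ℝ) / 4)) ^ 2 = Real.sqrt (2 / Real.pi) := by
      rw [← Real.rpow_natCast (_ ^ ((1:ℝ)/4)) 2, ← Real.rpow_mul (by positivity),
        Real.sqrt_eq_rpow]
      norm_num
    rw [mul_pow, mul_pow, h4, h5, ← Real.exp_nat_mul]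
    ring_nf
  simp_rw [key]
  rw [MeasureTheory.integral_const_mul]
  have hshift := MeasureTheory.integral_sub_right_eq_self (μ := volume)
    (fun x : ℝ => Real.exp (-(2 * d ^ 2 * m ^ 2 / D) * x ^ 2)) (t * v)
  rw [hshift, integral_gaussian]
  have hdm : (0:ℝ) < d * m := by positivity
  have e1 : Real.sqrt (2 / Real.pi) * Real.sqrt (Real.pi / (2 * d ^ 2 * m ^ 2 / D)) =
      Real.sqrt D / (d * m) := by
    rw [← Real.sqrt_mul (by positivity),
      show (2 / Real.pi) * (Real.pi / (2 * d ^ 2 * m ^ 2 / D)) = D / (d * m) ^ 2 by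
        field_simp,
      Real.sqrt_div hDpos.le, Real.sqrt_sq hdm.le]
  rw [mul_right_comm, e1]
  field_simp
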